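/- Let n ≥ 1, Σ ∈ S_n, Θ ∈ A_n, and suppose the complex Hermitian matrix S := Σ + (i/2)Θ is positive definite. Then the linear operator K on S_n defined by K(R) := ΣRΣ + ΘRΘ/4 is positive definite: for every nonzero R ∈ S_n, Tr(R(ΣRΣ + ΘRΘ/4)) > 0. -/

import Mathlib

open Matrix ComplexOrder

/-- Lemma 2 of the paper (positive definiteness part): if the quantum
covariance matrix `S = Σ + (i/2)Θ` is positive definite, then the operator
`K(R) = ΣRΣ + ΘRΘ/4` on the real symmetric matrices is positive definite:
`Tr(R K(R)) > 0` for every nonzero real symmetric `R`. -/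
theorem K_posdef_of_quantum_covariance_posdef
    {n : ℕ} (hn : 1 ≤ n)
    (Sgm Θ : Matrix (Fin n) (Fin n) ℝ)
    (hSgmSymm : Sgm.IsSymm) (hΘ : Θᵀ = -Θ)
    (hS : (Sgm.map (Complex.ofReal) +
      (Complex.I / 2) • Θ.map (Complex.ofReal)).PosDef) :
    ∀ R : Matrix (Fin n) (Fin n) ℝ, R.IsSymm → R ≠ 0 →
      0 < (R * (Sgm * R * Sgm + (1 / 4 : ℝ) • (Θ * R * Θ))).trace := by
  intro R hR hR0
  set Sc := Sgm.map Complex.ofReal with hScdef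
  set Tc := Θ.map Complex.ofReal with hTcdef
  set Rc := R.map Complex.ofReal with hRcdef
  set S := Sc + (Complex.I / 2) • Tc with hSdef
  set U := Sc - (Complex.I / 2) • Tc with hUdef
  -- basic mapping lemmas
  have hmapmul : ∀ A B : Matrix (Fin n) (Fin n) ℝ,
      (A * B).map Complex.ofReal = A.map Complex.ofReal * B.map Complex.ofReal :=
    fun A B => Matrix.map_mul (f := Complex.ofRealHom)
  have hmapadd : ∀ A B : Matrix (Fin n) (Fin n) ℝ,
      (A + B).map Complex.ofReal = A.map Complex.ofReal + B.map Complex.ofReal := by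
    intro A B; ext i j; simp
  have hmapsmul : ∀ (r : ℝ) (A : Matrix (Fin n) (Fin n) ℝ),
      (r • A).map Complex.ofReal = (r : ℂ) • A.map Complex.ofReal := by
    intro r A; ext i j; simp
  have hmaptrace : ∀ A : Matrix (Fin n) (Fin n) ℝ,
      (A.map Complex.ofReal).trace = (A.trace : ℂ) := by
    intro A; simp [Matrix.trace, Matrix.diag, Matrix.map_apply]
  -- Hermitianity of Rc
  have hRcH : Rcᴴ = Rc := by
    ext i j
    simp [Matrix.conjTranspose_apply, Matrix.map_apply, hRcdef]
    exact hR.apply i j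
  -- U is the transpose of S
  have hUtrans : Sᵀ = U := by
    have hScT : Scᵀ = Sc := by
      rw [hScdef, ← Matrix.transpose_map, hSgmSymm]
    have hTcT : Tcᵀ = -Tc := by
      rw [hTcdef, ← Matrix.transpose_map, hΘ]
      ext i j; simp
    rw [hSdef, hUdef, Matrix.transpose_add, Matrix.transpose_smul, hScT, hTcT,
      smul_neg, sub_eq_add_neg]
  have hU : U.PosDef := hUtrans ▸ hS.transpose
  -- sqrt facts
  open scoped MatrixOrder in set P := CFC.sqrt S with hPdef
  open scoped MatrixOrder in set Q := CFC.sqrt U with hQdef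
  have hP2 : P * P = S := by open scoped MatrixOrder in exact CFC.sqrt_mul_sqrt_self S hS.posSemidef.nonneg
  have hQ2 : Q * Q = U := by open scoped MatrixOrder in exact CFC.sqrt_mul_sqrt_self U hU.posSemidef.nonneg
  have hPH : Pᴴ = P := by open scoped MatrixOrder in exact (CFC.sqrt_nonneg S).posSemidef.1
  have hQH : Qᴴ = Q := by open scoped MatrixOrder in exact (CFC.sqrt_nonneg U).posSemidef.1
  have hPdet : IsUnit P.det := by
    have hd : P.det * P.det = S.det := by rw [← Matrix.det_mul, hP2]
    rw [isUnit_iff_ne_zero]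
    intro h0; rw [h0, mul_zero] at hd
    exact ne_of_gt hS.det_pos hd.symm
  have hQdet : IsUnit Q.det := by
    have hd : Q.det * Q.det = U.det := by rw [← Matrix.det_mul, hQ2]
    rw [isUnit_iff_ne_zero]
    intro h0; rw [h0, mul_zero] at hd
    exact ne_of_gt hU.det_pos hd.symm
  set B := P * Rc * Q with hBdef
  -- B is nonzero
  have hRcne : Rc ≠ 0 := by
    intro h
    apply hR0
    ext i j
    have := congrFun (congrFun h i) j
    simpa [hRcdef, Matrix.map_apply] using this
  have hcancel : P⁻¹ * B * Q⁻¹ = Rc := by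
    have h1 : P⁻¹ * B * Q⁻¹ = P⁻¹ * (P * (Rc * (Q * Q⁻¹))) := by
      rw [hBdef]; simp only [Matrix.mul_assoc]
    rw [h1, Matrix.mul_nonsing_inv _ hQdet, Matrix.mul_one, ← Matrix.mul_assoc,
      Matrix.nonsing_inv_mul _ hPdet, Matrix.one_mul]
  have hBne : B ≠ 0 := by
    intro h
    apply hRcne
    rw [← hcancel, h, Matrix.mul_zero, Matrix.zero_mul]
  -- the trace identity chain
  have hc : (Complex.I / 2) * (Complex.I / 2) = -(1 / 4 : ℂ) := by
    rw [div_mul_div_comm, Complex.I_mul_I]; norm_num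
  -- step B: complex trace equals Tr(Rc S Rc U)
  have stepB : (Rc * (Sc * Rc * Sc + ((1 / 4 : ℝ) : ℂ) • (Tc * Rc * Tc))).trace
      = (Rc * S * (Rc * U)).trace := by
    have expand : Rc * S * (Rc * U)
        = Rc * (Sc * (Rc * Sc)) + ((1 / 4 : ℝ) : ℂ) • (Rc * (Tc * (Rc * Tc)))
          + ((Complex.I / 2) • (Rc * (Tc * (Rc * Sc))) -
             (Complex.I / 2) • (Rc * (Sc * (Rc * Tc)))) := by
      rw [hSdef, hUdef]
      simp only [Matrix.mul_add, Matrix.add_mul, Matrix.mul_sub, Matrix.sub_mul,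
        Matrix.mul_smul, Matrix.smul_mul, smul_smul, hc, Matrix.mul_assoc]
      push_cast
      match_scalars <;> simp [div_mul_div_comm, Complex.I_mul_I] <;> norm_num
    rw [expand]
    simp only [Matrix.mul_add, Matrix.mul_smul, Matrix.trace_add, Matrix.trace_sub,
      Matrix.trace_smul, Matrix.mul_assoc]
    have cyc : (Rc * (Tc * (Rc * Sc))).trace = (Rc * (Sc * (Rc * Tc))).trace := by
      have h := Matrix.trace_mul_comm (Rc * Tc) (Rc * Sc)
      simpa only [Matrix.mul_assoc] using h
    rw [cyc]
    ring
  -- step C: Tr(Rc S Rc U) = Tr(Bᴴ B)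
  have stepC : (Rc * S * (Rc * U)).trace = (Bᴴ * B).trace := by
    have hBHB : Bᴴ * B = Q * (Rc * (P * (P * (Rc * Q)))) := by
      rw [hBdef]
      simp only [Matrix.conjTranspose_mul, hRcH, hPH, hQH, Matrix.mul_assoc]
    have hPP : P * (P * (Rc * Q)) = S * (Rc * Q) := by
      rw [← Matrix.mul_assoc, hP2]
    rw [hBHB, hPP, Matrix.trace_mul_comm Q (Rc * (S * (Rc * Q)))]
    have h2 : Rc * (S * (Rc * Q)) * Q = Rc * S * (Rc * (Q * Q)) := by
      simp only [Matrix.mul_assoc]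
    rw [h2, hQ2]
  -- step D: Tr(Bᴴ B) as a sum of squares
  have stepD : (Bᴴ * B).trace
      = ((∑ i, ∑ j, Complex.normSq (B j i) : ℝ) : ℂ) := by
    simp only [Matrix.trace, Matrix.diag, Matrix.mul_apply, Matrix.conjTranspose_apply]
    push_cast
    congr 1
    ext i
    congr 1
    ext j
    rw [Complex.normSq_eq_conj_mul_self]
    rfl
  -- assemble: the real trace equals the sum of squares
  have hmap : ((R * (Sgm * R * Sgm + (1 / 4 : ℝ) • (Θ * R * Θ))).trace : ℂ)
      = (Rc * (Sc * Rc * Sc + ((1 / 4 : ℝ) : ℂ) • (Tc * Rc * Tc))).trace := by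
    rw [← hmaptrace]
    congr 1
    rw [hmapmul, hmapadd, hmapmul, hmapmul, hmapsmul, hmapmul, hmapmul]
  have key : (R * (Sgm * R * Sgm + (1 / 4 : ℝ) • (Θ * R * Θ))).trace
      = ∑ i, ∑ j, Complex.normSq (B j i) := by
    have := hmap.trans (stepB.trans (stepC.trans stepD))
    exact_mod_cast this
  rw [key]
  -- positivity of the sum of squares
  obtain ⟨p, q, hpq⟩ : ∃ p q, B p q ≠ 0 := by
    by_contra hcon
    push_neg at hcon
    exact hBne (by ext i j; simpa using hcon i j)
  apply Finset.sum_pos'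
  · exact fun i _ => Finset.sum_nonneg fun j _ => Complex.normSq_nonneg _
  · refine ⟨q, Finset.mem_univ _, ?_⟩
    apply Finset.sum_pos'
    · exact fun j _ => Complex.normSq_nonneg _
    · exact ⟨p, Finset.mem_univ _, Complex.normSq_pos.mpr hpq⟩
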